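/- Let a, b > 0 and 1/2 ≤ ν < τ < 1. Then (a∇b - H_τ(a,b))/(τ(1-τ)) ≥ (a∇b - H_ν(a,b))/(ν(1-ν)). -/

import Mathlib

open Real Set

private lemma phi_mono : MonotoneOn (fun x : ℝ => Real.cosh x / Real.sinh x - 1/x) (Set.Ioi 0) := by
  have hderiv : ∀ x ∈ Set.Ioi (0:ℝ), HasDerivAt (fun x : ℝ => Real.cosh x / Real.sinh x - 1/x)
      (1/x^2 - 1/(Real.sinh x)^2) x := by
    intro x hx
    have hx0 : (0:ℝ) < x := hx
    have hs : Real.sinh x ≠ 0 := ne_of_gt (Real.sinh_pos_iff.2 hx0)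
    have h1 : HasDerivAt (fun x : ℝ => Real.cosh x / Real.sinh x)
        ((Real.sinh x * Real.sinh x - Real.cosh x * Real.cosh x) / (Real.sinh x)^2) x :=
      (Real.hasDerivAt_cosh x).div (Real.hasDerivAt_sinh x) hs
    have h2 : HasDerivAt (fun x : ℝ => 1/x) (-(x^2)⁻¹) x := by
      simpa [one_div] using (hasDerivAt_inv (ne_of_gt hx0))
    have h3 := h1.sub h2
    refine h3.congr_deriv (Eq.symm ?_)
    have hc := Real.cosh_sq_sub_sinh_sq x
    field_simp
    linear_combination (x ^ 2) * hc
  apply monotoneOn_of_deriv_nonneg (convex_Ioi 0)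
  · intro x hx
    exact ((hderiv x hx).continuousAt).continuousWithinAt
  · rw [interior_Ioi]
    intro x hx
    exact ((hderiv x hx).differentiableAt).differentiableWithinAt
  · rw [interior_Ioi]
    intro x hx
    rw [(hderiv x hx).deriv]
    have hx0 : (0:ℝ) < x := hx
    have hxs : x ≤ Real.sinh x := Real.self_le_sinh_iff.2 hx0.le
    have hs0 : (0:ℝ) < Real.sinh x := Real.sinh_pos_iff.2 hx0
    have : 1/(Real.sinh x)^2 ≤ 1/x^2 := by
      apply one_div_le_one_div_of_le (by positivity)
      nlinarith
    linarith

private lemma G_mono (c : ℝ) (hc : 0 < c) :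
    MonotoneOn (fun w : ℝ => Real.log (Real.sinh (c+w)) + Real.log (Real.sinh (c-w))
      - Real.log (c+w) - Real.log (c-w)) (Set.Ico 0 c) := by
  have hderiv : ∀ w ∈ Set.Ioo (0:ℝ) c, HasDerivAt (fun w : ℝ => Real.log (Real.sinh (c+w)) +
      Real.log (Real.sinh (c-w)) - Real.log (c+w) - Real.log (c-w))
      ((Real.cosh (c+w) / Real.sinh (c+w) - 1/(c+w)) -
       (Real.cosh (c-w) / Real.sinh (c-w) - 1/(c-w))) w := by
    intro w hw
    have h1 : (0:ℝ) < c + w := by linarith [hw.1]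
    have h2 : (0:ℝ) < c - w := by linarith [hw.2]
    have hs1 : Real.sinh (c+w) ≠ 0 := ne_of_gt (Real.sinh_pos_iff.2 h1)
    have hs2 : Real.sinh (c-w) ≠ 0 := ne_of_gt (Real.sinh_pos_iff.2 h2)
    have ha : HasDerivAt (fun w : ℝ => c + w) 1 w := by
      simpa using (hasDerivAt_id w).const_add c
    have hb : HasDerivAt (fun w : ℝ => c - w) (-1) w := by
      simpa using (hasDerivAt_id w).const_sub c
    have hA : HasDerivAt (fun w : ℝ => Real.log (Real.sinh (c+w)))
        ((Real.sinh (c+w))⁻¹ * (Real.cosh (c+w) * 1)) w :=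
      by have := (Real.hasDerivAt_log hs1).comp w ((Real.hasDerivAt_sinh (c+w)).comp w ha); exact this
    have hB : HasDerivAt (fun w : ℝ => Real.log (Real.sinh (c-w)))
        ((Real.sinh (c-w))⁻¹ * (Real.cosh (c-w) * (-1))) w :=
      by have := (Real.hasDerivAt_log hs2).comp w ((Real.hasDerivAt_sinh (c-w)).comp w hb); exact this
    have hC : HasDerivAt (fun w : ℝ => Real.log (c+w)) ((c+w)⁻¹ * 1) w :=
      (Real.hasDerivAt_log (ne_of_gt h1)).comp w ha
    have hD : HasDerivAt (fun w : ℝ => Real.log (c-w)) ((c-w)⁻¹ * (-1)) w :=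
      (Real.hasDerivAt_log (ne_of_gt h2)).comp w hb
    have := ((hA.add hB).sub hC).sub hD
    refine this.congr_deriv (Eq.symm ?_)
    field_simp
    ring
  apply monotoneOn_of_deriv_nonneg (convex_Ico 0 c)
  · -- continuity on Ico 0 c
    have h1 : ∀ w ∈ Set.Ico (0:ℝ) c, (0:ℝ) < c + w := fun w hw => by linarith [hw.1]
    have h2 : ∀ w ∈ Set.Ico (0:ℝ) c, (0:ℝ) < c - w := fun w hw => by linarith [hw.2]
    apply ContinuousOn.sub
    apply ContinuousOn.sub
    apply ContinuousOn.add
    · apply ContinuousOn.log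
      · exact (Real.continuous_sinh.comp (continuous_const.add continuous_id)).continuousOn
      · intro w hw; exact ne_of_gt (Real.sinh_pos_iff.2 (h1 w hw))
    · apply ContinuousOn.log
      · exact (Real.continuous_sinh.comp (continuous_const.sub continuous_id)).continuousOn
      · intro w hw; exact ne_of_gt (Real.sinh_pos_iff.2 (h2 w hw))
    · apply ContinuousOn.log
      · exact (continuous_const.add continuous_id).continuousOn
      · intro w hw; exact ne_of_gt (h1 w hw)
    · apply ContinuousOn.log
      · exact (continuous_const.sub continuous_id).continuousOn
      · intro w hw; exact ne_of_gt (h2 w hw)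
  · rw [interior_Ico]
    intro w hw
    exact ((hderiv w hw).differentiableAt).differentiableWithinAt
  · rw [interior_Ico]
    intro w hw
    rw [(hderiv w hw).deriv]
    have h1 : (0:ℝ) < c - w := by linarith [hw.2]
    have h2 : c - w ≤ c + w := by linarith [hw.1]
    have := phi_mono (Set.mem_Ioi.2 h1) (Set.mem_Ioi.2 (by linarith [hw.1, hw.2] : (0:ℝ) < c + w)) h2
    simpa using sub_nonneg.2 this

private lemma sinh_ratio_mono (c w1 w2 : ℝ) (hc : 0 < c) (h0 : 0 ≤ w1) (h12 : w1 ≤ w2)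
    (h2c : w2 < c) :
    Real.sinh (c+w1) * Real.sinh (c-w1) * ((c+w2)*(c-w2)) ≤
    Real.sinh (c+w2) * Real.sinh (c-w2) * ((c+w1)*(c-w1)) := by
  have hm1 : w1 ∈ Set.Ico (0:ℝ) c := ⟨h0, lt_of_le_of_lt h12 h2c⟩
  have hm2 : w2 ∈ Set.Ico (0:ℝ) c := ⟨le_trans h0 h12, h2c⟩
  have hG := G_mono c hc hm1 hm2 h12
  have p1 : (0:ℝ) < c + w1 := by linarith
  have q1 : (0:ℝ) < c - w1 := by linarith [hm1.2]
  have p2 : (0:ℝ) < c + w2 := by linarith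
  have q2 : (0:ℝ) < c - w2 := by linarith
  have sp1 := Real.sinh_pos_iff.2 p1
  have sq1 := Real.sinh_pos_iff.2 q1
  have sp2 := Real.sinh_pos_iff.2 p2
  have sq2 := Real.sinh_pos_iff.2 q2
  have key : Real.sinh (c+w1) * Real.sinh (c-w1) / ((c+w1)*(c-w1)) ≤
      Real.sinh (c+w2) * Real.sinh (c-w2) / ((c+w2)*(c-w2)) := by
    rw [← Real.log_le_log_iff (by positivity) (by positivity),
        Real.log_div (by positivity) (by positivity),
        Real.log_div (by positivity) (by positivity),
        Real.log_mul (ne_of_gt sp1) (ne_of_gt sq1),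
        Real.log_mul (ne_of_gt sp2) (ne_of_gt sq2),
        Real.log_mul (ne_of_gt p1) (ne_of_gt q1),
        Real.log_mul (ne_of_gt p2) (ne_of_gt q2)]
    simpa [sub_sub] using hG
  rw [div_le_div_iff₀ (by positivity) (by positivity)] at key
  linarith [key]

private lemma heinz_key (K u v : ℝ) (hK : 0 < K) (hu : 0 ≤ u) (huv : u ≤ v) (hv : v < K) :
    (Real.cosh K - Real.cosh u) * (K^2 - v^2) ≤ (Real.cosh K - Real.cosh v) * (K^2 - u^2) := by
  have prod : ∀ p q : ℝ, 2 * (Real.sinh p * Real.sinh q) = Real.cosh (p+q) - Real.cosh (p-q) := by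
    intro p q; rw [Real.cosh_add, Real.cosh_sub]; ring
  have e1 := prod (K/2+u/2) (K/2-u/2)
  have e2 := prod (K/2+v/2) (K/2-v/2)
  rw [show K/2+u/2+(K/2-u/2) = K by ring, show K/2+u/2-(K/2-u/2) = u by ring] at e1
  rw [show K/2+v/2+(K/2-v/2) = K by ring, show K/2+v/2-(K/2-v/2) = v by ring] at e2
  have h := sinh_ratio_mono (K/2) (u/2) (v/2) (by linarith) (by linarith) (by linarith)
    (by linarith)
  rw [← e1, ← e2]
  rw [show K/2+u/2 = (K+u)/2 by ring, show K/2-u/2 = (K-u)/2 by ring,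
      show K/2+v/2 = (K+v)/2 by ring, show K/2-v/2 = (K-v)/2 by ring] at h ⊢
  nlinarith [h]

theorem heinz_quadratic_comparison_right (a b ν τ : ℝ) (ha : 0 < a) (hb : 0 < b)
    (hν : 1/2 ≤ ν) (hντ : ν < τ) (hτ : τ < 1) :
    ((a + b) / 2 - (a ^ ν * b ^ (1 - ν) + a ^ (1 - ν) * b ^ ν) / 2) / (ν * (1 - ν)) ≤
    ((a + b) / 2 - (a ^ τ * b ^ (1 - τ) + a ^ (1 - τ) * b ^ τ) / 2) / (τ * (1 - τ)) := by
  obtain ⟨m, d0, hm1, hm2⟩ : ∃ m d0, Real.log a = m + d0 ∧ Real.log b = m - d0 :=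
    ⟨(Real.log a + Real.log b)/2, (Real.log a - Real.log b)/2, by ring, by ring⟩
  have ha' : a = Real.exp (m + d0) := by rw [← hm1, Real.exp_log ha]
  have hb' : b = Real.exp (m - d0) := by rw [← hm2, Real.exp_log hb]
  have hnum : ∀ t : ℝ, (a + b)/2 - (a ^ t * b ^ (1-t) + a ^ (1-t) * b ^ t)/2
      = Real.exp m * (Real.cosh d0 - Real.cosh ((2*t-1)*d0)) := by
    intro t
    rw [Real.rpow_def_of_pos ha, Real.rpow_def_of_pos hb, Real.rpow_def_of_pos ha,
        Real.rpow_def_of_pos hb, hm1, hm2, ← Real.exp_add, ← Real.exp_add,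
        show (m+d0)*t + (m-d0)*(1-t) = m + (2*t-1)*d0 by ring,
        show (m+d0)*(1-t) + (m-d0)*t = m - (2*t-1)*d0 by ring,
        Real.cosh_eq, Real.cosh_eq, ha', hb']
    simp only [Real.exp_add, Real.exp_sub, Real.exp_neg]
    field_simp
  rw [hnum ν, hnum τ]
  have hν0 : (0:ℝ) < ν := lt_of_lt_of_le (by norm_num) hν
  have hν1 : ν < 1 := lt_trans hντ hτ
  have hτ0 : (0:ℝ) < τ := lt_trans hν0 hντ
  have hP1 : 0 < ν * (1 - ν) := by nlinarith
  have hP2 : 0 < τ * (1 - τ) := by nlinarith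
  by_cases hd0 : d0 = 0
  · simp [hd0]
  · have hdpos : 0 < |d0| := abs_pos.2 hd0
    have hc2 : ∀ s : ℝ, 0 ≤ s → Real.cosh (s * d0) = Real.cosh (s * |d0|) := by
      intro s hs
      rw [← Real.cosh_abs (s*d0), abs_mul, abs_of_nonneg hs]
    have hs1 : (0:ℝ) ≤ 2*ν-1 := by linarith
    have hs2 : (0:ℝ) ≤ 2*τ-1 := by linarith
    rw [show Real.cosh d0 = Real.cosh |d0| from (Real.cosh_abs d0).symm, hc2 _ hs1, hc2 _ hs2]
    set d := |d0| with hd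
    have hkey := heinz_key d ((2*ν-1)*d) ((2*τ-1)*d) hdpos (by positivity)
      (by nlinarith) (by nlinarith)
    rw [div_le_div_iff₀ hP1 hP2]
    have hexp := Real.exp_pos m
    have h5 : ((Real.cosh d - Real.cosh ((2*ν-1)*d)) * (τ*(1-τ))) * (4*d^2) ≤
        ((Real.cosh d - Real.cosh ((2*τ-1)*d)) * (ν*(1-ν))) * (4*d^2) := by nlinarith [hkey]
    have h6 := le_of_mul_le_mul_right h5 (by positivity)
    nlinarith [h6, hexp]
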